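/- The number NCP_0(n) of 0-distant noncrossing partitions of [n] equals the n-th Motzkin number M_n. -/

import Mathlib

open Finset

/-- Set partitions of `[n] = {1, …, n}`. -/
abbrev SP (n : ℕ) := Finpartition (Finset.Icc 1 n)

/-- `(i, j)` is an edge of the diagram of the partition `P`: either a loop `(i, i)`
on a singleton block, or `i < j` are in a common block with no element of that
block strictly between them. -/
def IsEdge {n : ℕ} (P : SP n) (i j : ℕ) : Prop :=
  (i = j ∧ {i} ∈ P.parts) ∨
  (i < j ∧ ∃ B ∈ P.parts, i ∈ B ∧ j ∈ B ∧ ∀ m ∈ B, ¬(i < m ∧ m < j))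

/-- Two edges `e₁ = (i₁, j₁)` and `e₂ = (i₂, j₂)` form a `k`-distant crossing:
`i₁ < i₂ ≤ j₁ < j₂` and `j₁ - i₂ ≥ k`. -/
def CrossPair (k : ℕ) (e₁ e₂ : ℕ × ℕ) : Prop :=
  e₁.1 < e₂.1 ∧ e₂.1 ≤ e₁.2 ∧ e₁.2 < e₂.2 ∧ k ≤ e₁.2 - e₂.1

/-- Two edges `e₁ = (i₁, j₁)` and `e₂ = (i₂, j₂)` form a `k`-distant nesting:
`i₁ < i₂ ≤ j₂ < j₁` and `j₂ - i₂ ≥ k`. -/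
def NestPair (k : ℕ) (e₁ e₂ : ℕ × ℕ) : Prop :=
  e₁.1 < e₂.1 ∧ e₂.1 ≤ e₂.2 ∧ e₂.2 < e₁.2 ∧ k ≤ e₂.2 - e₂.1

/-- The number of `k`-distant crossings of the partition `P`. -/
noncomputable def dcr {n : ℕ} (k : ℕ) (P : SP n) : ℕ :=
  Set.ncard {p : (ℕ × ℕ) × ℕ × ℕ |
    IsEdge P p.1.1 p.1.2 ∧ IsEdge P p.2.1 p.2.2 ∧ CrossPair k p.1 p.2}

/-- The number of `k`-distant nestings of the partition `P`. -/
noncomputable def dne {n : ℕ} (k : ℕ) (P : SP n) : ℕ :=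
  Set.ncard {p : (ℕ × ℕ) × ℕ × ℕ |
    IsEdge P p.1.1 p.1.2 ∧ IsEdge P p.2.1 p.2.2 ∧ NestPair k p.1 p.2}

/-- `P` is a complete matching: every block has exactly two elements. -/
def IsMatching {n : ℕ} (P : SP n) : Prop := ∀ B ∈ P.parts, B.card = 2

/-- The number of `k`-distant noncrossing complete matchings of `[m]`. -/
noncomputable def NCM (k m : ℕ) : ℕ :=
  Set.ncard {P : SP m | IsMatching P ∧ dcr k P = 0}

/-- The number of `k`-distant noncrossing partitions of `[n]`. -/
noncomputable def NCP (k n : ℕ) : ℕ :=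
  Set.ncard {P : SP n | dcr k P = 0}

/-- Openers of `P`: minimal elements of blocks of size at least two. -/
def openers {n : ℕ} (P : SP n) : Set ℕ :=
  {v | ∃ B ∈ P.parts, v ∈ B ∧ 2 ≤ B.card ∧ ∀ m ∈ B, v ≤ m}

/-- Closers of `P`: maximal elements of blocks of size at least two. -/
def closers {n : ℕ} (P : SP n) : Set ℕ :=
  {v | ∃ B ∈ P.parts, v ∈ B ∧ 2 ≤ B.card ∧ ∀ m ∈ B, m ≤ v}

/-- Singletons of `P`. -/
def singletons {n : ℕ} (P : SP n) : Set ℕ := {v | {v} ∈ P.parts}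

/-- Transients of `P`: elements of a block that are neither its minimum nor its
maximum (equivalently, vertices incident to two edges of the diagram). -/
def transients {n : ℕ} (P : SP n) : Set ℕ :=
  {v | ∃ B ∈ P.parts, v ∈ B ∧ (∃ m ∈ B, m < v) ∧ (∃ m ∈ B, v < m)}

open Finset

/-- Steps for Schröder paths: `U = (1,1)`, `D = (1,-1)`, `H = (2,0)`. -/
inductive SStep | U | D | H
deriving DecidableEq

/-- The total horizontal length of a Schröder path. -/
def xlen (l : List SStep) : ℕ :=
  (l.map (fun s => match s with | .H => 2 | _ => 1)).sum

/-- The final height of a Schröder path. -/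
def sht (l : List SStep) : ℤ :=
  (l.map (fun s => match s with | .U => 1 | .D => -1 | .H => 0)).sum

/-- A little Schröder path of length `2n`: from `(0,0)` to `(2n,0)` with steps
`(1,1)`, `(1,-1)`, `(2,0)`, never below the x-axis, no `(2,0)` step on the x-axis. -/
def IsLittleSchroederPath (n : ℕ) (l : List SStep) : Prop :=
  xlen l = 2 * n ∧ sht l = 0 ∧ (∀ p, p <+: l → 0 ≤ sht p) ∧
  ∀ p, p ++ [SStep.H] <+: l → 0 < sht p

/-- The `n`-th little Schröder number (A001003), as the number of little
Schröder paths of length `2n`. -/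
noncomputable def littleSchroeder (n : ℕ) : ℕ :=
  Set.ncard {l : List SStep | IsLittleSchroederPath n l}

/-- Steps for Motzkin paths. -/
inductive MStep | up | down | flat
deriving DecidableEq

instance : Fintype MStep :=
  ⟨{MStep.up, MStep.down, MStep.flat}, fun x => by cases x <;> simp⟩

/-- The height of a Motzkin path `f` of length `m` after `i` steps. -/
def mht {m : ℕ} (f : Fin m → MStep) (i : ℕ) : ℤ :=
  ∑ j : Fin m, if (j : ℕ) < i then
    (match f j with | .up => 1 | .down => -1 | .flat => 0) else 0

/-- `f` is a Motzkin path: it stays weakly above the x-axis and ends at height 0. -/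
def IsMotzkinPath {m : ℕ} (f : Fin m → MStep) : Prop :=
  (∀ i, 0 ≤ mht f i) ∧ mht f m = 0

/-- The `n`-th Motzkin number, as the number of Motzkin paths of length `n`. -/
noncomputable def motzkin (n : ℕ) : ℕ :=
  Set.ncard {f : Fin n → MStep | IsMotzkinPath f}

/-- The weight of the path `f`, where up steps have weight 1, a horizontal step
at height `h` has weight `b h`, and a down step starting at height `h` has
weight `lam h`. -/
def mweight {m : ℕ} (b lam : ℕ → ℕ) (f : Fin m → MStep) : ℕ :=
  ∏ j : Fin m, match f j with
    | .up => 1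
    | .flat => b (mht f (j : ℕ)).toNat
    | .down => lam (mht f (j : ℕ)).toNat

open Classical in
/-- The total weight of all weighted Motzkin paths of length `m`
(the `m`-th moment for the recurrence coefficients `b`, `lam`). -/
noncomputable def moment (b lam : ℕ → ℕ) (m : ℕ) : ℕ :=
  ∑ f ∈ Finset.univ.filter (fun f : Fin m → MStep => IsMotzkinPath f),
    mweight b lam f

open Classical in
/-- The total weight of all weighted Dyck paths (Motzkin paths with no
horizontal steps) of length `m`, where a down step starting at height `h` has
weight `lam h`. -/
noncomputable def dyckMoment (lam : ℕ → ℕ) (m : ℕ) : ℕ :=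
  ∑ f ∈ Finset.univ.filter
      (fun f : Fin m → MStep => IsMotzkinPath f ∧ ∀ j, f j ≠ MStep.flat),
    mweight (fun _ => 1) lam f

namespace NCPZero

open Finset

variable {n : ℕ}

/-- `P` is good: all blocks have ≤ 2 elements and no two pair blocks cross. -/
def Good {n : ℕ} (P : SP n) : Prop :=
  (∀ B ∈ P.parts, B.card ≤ 2) ∧
  ∀ a b c d : ℕ, {a, b} ∈ P.parts → {c, d} ∈ P.parts → a < c → c < b → b < d → False

lemma edge_mem_left {P : SP n} {i j : ℕ} (h : IsEdge P i j) : i ∈ Finset.Icc 1 n := by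
  rcases h with ⟨rfl, h⟩ | ⟨_, B, hB, hi, _, _⟩
  · exact P.le h (Finset.mem_singleton_self i)
  · exact P.le hB hi

lemma edge_mem_right {P : SP n} {i j : ℕ} (h : IsEdge P i j) : j ∈ Finset.Icc 1 n := by
  rcases h with ⟨rfl, h⟩ | ⟨_, B, hB, _, hj, _⟩
  · exact P.le h (Finset.mem_singleton_self i)
  · exact P.le hB hj

lemma crossSet_finite (P : SP n) (k : ℕ) :
    {p : (ℕ × ℕ) × ℕ × ℕ |
      IsEdge P p.1.1 p.1.2 ∧ IsEdge P p.2.1 p.2.2 ∧ CrossPair k p.1 p.2}.Finite := by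
  apply Set.Finite.subset (((Finset.Icc 1 n ×ˢ Finset.Icc 1 n) ×ˢ
    (Finset.Icc 1 n ×ˢ Finset.Icc 1 n)).finite_toSet)
  rintro ⟨⟨i1, j1⟩, i2, j2⟩ ⟨h1, h2, -⟩
  simp only [Finset.coe_product, Set.mem_prod]
  exact ⟨⟨edge_mem_left h1, edge_mem_right h1⟩, edge_mem_left h2, edge_mem_right h2⟩

lemma dcr_zero_iff (P : SP n) :
    dcr 0 P = 0 ↔ ∀ e₁ e₂ : ℕ × ℕ, IsEdge P e₁.1 e₁.2 → IsEdge P e₂.1 e₂.2 →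
      ¬ CrossPair 0 e₁ e₂ := by
  rw [dcr, Set.ncard_eq_zero (crossSet_finite P 0), Set.eq_empty_iff_forall_notMem]
  constructor
  · intro h e₁ e₂ h1 h2 hc; exact h (e₁, e₂) ⟨h1, h2, hc⟩
  · rintro h ⟨e₁, e₂⟩ ⟨h1, h2, hc⟩; exact h e₁ e₂ h1 h2 hc

lemma edge_cases {P : SP n} (hP : ∀ B ∈ P.parts, B.card ≤ 2) {i j : ℕ}
    (h : IsEdge P i j) : i = j ∨ (i < j ∧ {i, j} ∈ P.parts) := by
  rcases h with ⟨rfl, _⟩ | ⟨hij, B, hB, hi, hj, -⟩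
  · exact Or.inl rfl
  · right; refine ⟨hij, ?_⟩
    have hsub : ({i, j} : Finset ℕ) ⊆ B := by
      intro x hx; rcases Finset.mem_insert.mp hx with rfl | hx
      · exact hi
      · rw [Finset.mem_singleton.mp hx]; exact hj
    have hcard : ({i, j} : Finset ℕ).card = 2 := by
      rw [Finset.card_insert_of_notMem (by simp [hij.ne]), Finset.card_singleton]
    have heq := Finset.eq_of_subset_of_card_le hsub (by rw [hcard]; exact hP B hB)
    rw [heq]; exact hB

lemma good_dcr {P : SP n} (hP : Good P) : dcr 0 P = 0 := by
  rw [dcr_zero_iff]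
  rintro ⟨i1, j1⟩ ⟨i2, j2⟩ h1 h2 ⟨hc1, hc2, hc3, -⟩
  simp only at hc1 hc2 hc3
  rcases edge_cases hP.1 h1 with heq | ⟨hlt1, hm1⟩
  · simp only at heq; omega
  rcases edge_cases hP.1 h2 with heq | ⟨hlt2, hm2⟩
  · simp only at heq; omega
  dsimp only at hlt1 hm1 hlt2 hm2
  rcases eq_or_lt_of_le hc2 with heq | hc2'
  · -- i2 = j1 : blocks share j1
    have hbe := P.eq_of_mem_parts hm1 hm2 (show j1 ∈ ({i1, j1} : Finset ℕ) by simp)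
      (show j1 ∈ ({i2, j2} : Finset ℕ) by simp [← heq])
    have hi1 : i1 ∈ ({i2, j2} : Finset ℕ) := by rw [← hbe]; simp
    rcases Finset.mem_insert.mp hi1 with heq2 | h
    · omega
    · rw [Finset.mem_singleton.mp h] at hc1; omega
  · exact hP.2 i1 j1 i2 j2 hm1 hm2 hc1 hc2' hc3

lemma dcr_good {P : SP n} (h : dcr 0 P = 0) : Good P := by
  rw [dcr_zero_iff] at h
  constructor
  · intro B hB
    by_contra hcard
    push_neg at hcard
    have hne : B.Nonempty := P.nonempty_of_mem_parts hB
    have hmM : B.min' hne < B.max' hne := B.min'_lt_max'_of_card (by omega)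
    have hMe : B.max' hne ∈ B.erase (B.min' hne) :=
      Finset.mem_erase.mpr ⟨hmM.ne', B.max'_mem hne⟩
    have hCne : ((B.erase (B.min' hne)).erase (B.max' hne)).Nonempty := by
      rw [← Finset.card_pos, Finset.card_erase_of_mem hMe,
        Finset.card_erase_of_mem (B.min'_mem hne)]
      omega
    obtain ⟨b, hb⟩ := hCne
    simp only [Finset.mem_erase] at hb
    obtain ⟨hbM, hbm, hbB⟩ := hb
    have hmb : B.min' hne < b := B.min'_lt_of_mem_erase_min' hne (Finset.mem_erase.mpr ⟨hbm, hbB⟩)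
    have hbM' : b < B.max' hne := B.lt_max'_of_mem_erase_max' hne (Finset.mem_erase.mpr ⟨hbM, hbB⟩)
    -- a = largest element of B below b; c = smallest above b
    have hAne : (B.filter (· < b)).Nonempty := ⟨B.min' hne, by simp [B.min'_mem hne, hmb]⟩
    have hCne' : (B.filter (b < ·)).Nonempty := ⟨B.max' hne, by simp [B.max'_mem hne, hbM']⟩
    set a := (B.filter (· < b)).max' hAne with ha
    set c := (B.filter (b < ·)).min' hCne' with hc
    have haB : a ∈ B ∧ a < b := Finset.mem_filter.mp ((B.filter (· < b)).max'_mem hAne)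
    have hcB : c ∈ B ∧ b < c := Finset.mem_filter.mp ((B.filter (b < ·)).min'_mem hCne')
    have e1 : IsEdge P a b := by
      refine Or.inr ⟨haB.2, B, hB, haB.1, hbB, ?_⟩
      rintro m hm ⟨h1, h2⟩
      have : m ≤ a := (B.filter (· < b)).le_max' m (by simp [hm, h2])
      omega
    have e2 : IsEdge P b c := by
      refine Or.inr ⟨hcB.2, B, hB, hbB, hcB.1, ?_⟩
      rintro m hm ⟨h1, h2⟩
      have : c ≤ m := (B.filter (b < ·)).min'_le m (by simp [hm, h1])
      omega
    exact h (a, b) (b, c) e1 e2 ⟨haB.2, le_refl b, hcB.2, Nat.zero_le _⟩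
  · intro a b c d hab hcd h1 h2 h3
    have hanb : a ≠ b := by omega
    have hcnd : c ≠ d := by omega
    have e1 : IsEdge P a b := by
      refine Or.inr ⟨by omega, {a, b}, hab, by simp, by simp, ?_⟩
      intro m hm
      rcases Finset.mem_insert.mp hm with rfl | hm
      · omega
      · rw [Finset.mem_singleton.mp hm]; omega
    have e2 : IsEdge P c d := by
      refine Or.inr ⟨by omega, {c, d}, hcd, by simp, by simp, ?_⟩
      intro m hm
      rcases Finset.mem_insert.mp hm with rfl | hm
      · omega
      · rw [Finset.mem_singleton.mp hm]; omega
    exact h (a, b) (c, d) e1 e2 ⟨h1, by omega, h3, Nat.zero_le _⟩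

end NCPZero
namespace NCPZero

variable {n : ℕ}

def stepval : MStep → ℤ
  | .up => 1
  | .down => -1
  | .flat => 0

lemma mht_eq_sum {m : ℕ} (f : Fin m → MStep) (i : ℕ) :
    mht f i = ∑ j : Fin m, if (j : ℕ) < i then stepval (f j) else 0 := by
  unfold mht
  refine Finset.sum_congr rfl fun j _ => ?_
  split_ifs
  · cases f j <;> rfl
  · rfl

lemma mht_succ {m : ℕ} (f : Fin m → MStep) {i : ℕ} (h : i < m) :
    mht f (i + 1) = mht f i + stepval (f ⟨i, h⟩) := by
  rw [mht_eq_sum, mht_eq_sum]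
  have key : ∀ j : Fin m, (if (j : ℕ) < i + 1 then stepval (f j) else 0)
      = (if (j : ℕ) < i then stepval (f j) else 0)
        + (if j = ⟨i, h⟩ then stepval (f j) else 0) := by
    intro j
    have hji : (j = (⟨i, h⟩ : Fin m)) ↔ (j : ℕ) = i := by
      rw [Fin.ext_iff]
    rcases lt_trichotomy (j : ℕ) i with hj | hj | hj
    · rw [if_pos (by omega), if_pos hj, if_neg (fun e => absurd (hji.mp e) (by omega)), add_zero]
    · rw [if_pos (by omega), if_neg (by omega), if_pos (hji.mpr hj), zero_add]
    · rw [if_neg (by omega), if_neg (by omega), if_neg (fun e => absurd (hji.mp e) (by omega)),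
        add_zero]
  rw [Finset.sum_congr rfl fun j _ => key j, Finset.sum_add_distrib,
    Finset.sum_ite_eq' Finset.univ (⟨i, h⟩ : Fin m)]
  simp

lemma mht_stable {m : ℕ} (f : Fin m → MStep) {i : ℕ} (h : m ≤ i) :
    mht f i = mht f m := by
  rw [mht_eq_sum, mht_eq_sum]
  refine Finset.sum_congr rfl fun j _ => ?_
  rw [if_pos (lt_of_lt_of_le j.isLt h), if_pos j.isLt]

lemma mht_card {m : ℕ} (f : Fin m → MStep) (i : ℕ) :
    mht f i = ((Finset.univ.filter fun j : Fin m => (j : ℕ) < i ∧ f j = .up).card : ℤ)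
            - ((Finset.univ.filter fun j : Fin m => (j : ℕ) < i ∧ f j = .down).card : ℤ) := by
  rw [mht_eq_sum]
  have key : ∀ j : Fin m, (if (j : ℕ) < i then stepval (f j) else 0)
      = (if (j : ℕ) < i ∧ f j = .up then (1 : ℤ) else 0)
        - (if (j : ℕ) < i ∧ f j = .down then (1 : ℤ) else 0) := by
    intro j
    cases hj : f j <;> split_ifs <;> simp_all [stepval]
  rw [Finset.sum_congr rfl fun j _ => key j, Finset.sum_sub_distrib,
    Finset.sum_boole, Finset.sum_boole]

open Classical in
/-- The Motzkin path associated to a partition. -/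
noncomputable def toPath (P : SP n) : Fin n → MStep := fun j =>
  if {(j : ℕ) + 1} ∈ P.parts then .flat
  else if ∃ w, (j : ℕ) + 1 < w ∧ ∃ B ∈ P.parts, (j : ℕ) + 1 ∈ B ∧ w ∈ B then .up
  else .down

lemma tp_flat {P : SP n} {j : Fin n} :
    toPath P j = .flat ↔ {(j : ℕ) + 1} ∈ P.parts := by
  unfold toPath
  split_ifs with h1 h2 <;> simp_all

lemma pair_mem_parts_right {P : SP n} {u v : ℕ} (h : {u, v} ∈ P.parts) (huv : u ≠ v) :
    ¬ ({v} ∈ P.parts) := by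
  intro hs
  have := P.eq_of_mem_parts hs h (Finset.mem_singleton_self v) (by simp)
  have : u ∈ ({v} : Finset ℕ) := by rw [this]; simp
  exact huv (Finset.mem_singleton.mp this)

lemma tp_up_pair {P : SP n} (hP : ∀ B ∈ P.parts, B.card ≤ 2) {j : Fin n} :
    toPath P j = .up ↔ ∃ w, (j : ℕ) + 1 < w ∧ {(j : ℕ) + 1, w} ∈ P.parts := by
  set v := (j : ℕ) + 1 with hv
  unfold toPath
  rw [← hv]
  split_ifs with h1 h2
  · simp only [reduceCtorEq, false_iff]  -- flat = up is false
    rintro ⟨w, hw, hmem⟩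
    exact pair_mem_parts_right (by rw [Finset.pair_comm]; exact hmem) (by omega) h1
  · simp only [true_iff]
    obtain ⟨w, hvw, B, hB, hvB, hwB⟩ := h2
    refine ⟨w, hvw, ?_⟩
    have hsub : ({v, w} : Finset ℕ) ⊆ B := by
      intro x hx; rcases Finset.mem_insert.mp hx with rfl | hx
      · exact hvB
      · rw [Finset.mem_singleton.mp hx]; exact hwB
    have hcard : ({v, w} : Finset ℕ).card = 2 := by
      rw [Finset.card_insert_of_notMem (by simp; omega), Finset.card_singleton]
    have heq := Finset.eq_of_subset_of_card_le hsub (by rw [hcard]; exact hP B hB)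
    rw [heq]; exact hB
  · simp only [reduceCtorEq, false_iff]
    rintro ⟨w, hw, hmem⟩
    exact h2 ⟨w, hw, {v, w}, hmem, by simp, by simp⟩

lemma tp_down_pair {P : SP n} (hP : ∀ B ∈ P.parts, B.card ≤ 2) {j : Fin n} :
    toPath P j = .down ↔ ∃ u, u < (j : ℕ) + 1 ∧ {u, (j : ℕ) + 1} ∈ P.parts := by
  set v := (j : ℕ) + 1 with hv
  have hvmem : v ∈ Finset.Icc 1 n := by
    rw [Finset.mem_Icc]
    exact ⟨by omega, by have := j.isLt; omega⟩
  unfold toPath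
  rw [← hv]
  split_ifs with h1 h2
  · simp only [reduceCtorEq, false_iff]
    rintro ⟨u, hu, hmem⟩
    exact pair_mem_parts_right hmem (by omega) h1
  · simp only [reduceCtorEq, false_iff]
    rintro ⟨u, hu, hmem⟩
    obtain ⟨w, hvw, B, hB, hvB, hwB⟩ := h2
    have heq := P.eq_of_mem_parts hB hmem hvB (by simp)
    rw [heq] at hwB
    rcases Finset.mem_insert.mp hwB with rfl | hw
    · omega
    · rw [Finset.mem_singleton.mp hw] at hvw; omega
  · simp only [true_iff]
    obtain ⟨B, hB, hvB⟩ := P.exists_mem hvmem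
    have h2' : ¬ ∃ w, v < w ∧ w ∈ B := by
      rintro ⟨w, hvw, hwB⟩
      exact h2 ⟨w, hvw, B, hB, hvB, hwB⟩
    push_neg at h2'
    -- B has card ≤ 2, contains v, is not {v}, so B = {u, v} with u < v
    have hcard := hP B hB
    have hBne : B ≠ {v} := fun he => h1 (he ▸ hB)
    have : ∃ u ∈ B, u ≠ v := by
      by_contra hc
      push_neg at hc
      apply hBne
      apply Finset.eq_singleton_iff_unique_mem.mpr ⟨hvB, hc⟩
    obtain ⟨u, huB, huv⟩ := this
    have huvlt : u < v := by
      have : ¬ v < u := fun hlt => h2' u hlt huB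
      omega
    refine ⟨u, huvlt, ?_⟩
    have hsub : ({u, v} : Finset ℕ) ⊆ B := by
      intro x hx; rcases Finset.mem_insert.mp hx with rfl | hx
      · exact huB
      · rw [Finset.mem_singleton.mp hx]; exact hvB
    have hcard2 : ({u, v} : Finset ℕ).card = 2 := by
      rw [Finset.card_insert_of_notMem (by simp [huv]), Finset.card_singleton]
    have heq := Finset.eq_of_subset_of_card_le hsub (by rw [hcard2]; exact hcard)
    rw [heq]; exact hB

end NCPZero
namespace NCPZero

variable {n : ℕ}

lemma partner_unique {P : SP n} {u v w : ℕ} (h1 : {u, v} ∈ P.parts) (h2 : {u, w} ∈ P.parts)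
    (hv : v ≠ u) (hw : w ≠ u) : v = w := by
  have heq := P.eq_of_mem_parts h1 h2 (show u ∈ ({u, v} : Finset ℕ) by simp)
    (show u ∈ ({u, w} : Finset ℕ) by simp)
  have : v ∈ ({u, w} : Finset ℕ) := by rw [← heq]; simp
  rcases Finset.mem_insert.mp this with rfl | h
  · exact absurd rfl hv
  · exact Finset.mem_singleton.mp h

open Classical in
/-- The position of the partner of position `j` (itself if none). -/
noncomputable def mate (P : SP n) (j : Fin n) : Fin n :=
  if h : ∃ u ∈ Finset.Icc 1 n, {u, (j : ℕ) + 1} ∈ P.parts ∧ u ≠ (j : ℕ) + 1 then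
    ⟨h.choose - 1, by
      have hs := h.choose_spec
      have h2 := (Finset.mem_Icc.mp hs.1).2
      have := j.isLt
      omega⟩
  else j

lemma mate_eq {P : SP n} {j : Fin n} {u : ℕ} (hu1 : 1 ≤ u) (hun : u ≤ n)
    (hmem : {u, (j : ℕ) + 1} ∈ P.parts) (hne : u ≠ (j : ℕ) + 1) :
    ((mate P j : ℕ)) = u - 1 := by
  unfold mate
  have hex : ∃ u ∈ Finset.Icc 1 n, {u, (j : ℕ) + 1} ∈ P.parts ∧ u ≠ (j : ℕ) + 1 :=
    ⟨u, Finset.mem_Icc.mpr ⟨hu1, hun⟩, hmem, hne⟩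
  rw [dif_pos hex]
  have hs := hex.choose_spec
  have heq : hex.choose = u := partner_unique (by rw [Finset.pair_comm]; exact hs.2.1)
    (by rw [Finset.pair_comm]; exact hmem) hs.2.2 hne
  show hex.choose - 1 = u - 1
  rw [heq]

lemma mate_spec_down {P : SP n} (hP : ∀ B ∈ P.parts, B.card ≤ 2) {j : Fin n}
    (hj : toPath P j = .down) :
    (mate P j : ℕ) + 1 < (j : ℕ) + 1 ∧ {(mate P j : ℕ) + 1, (j : ℕ) + 1} ∈ P.parts := by
  obtain ⟨u, hu, hmem⟩ := (tp_down_pair hP).mp hj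
  have hu1 : 1 ≤ u := by
    have := P.le hmem (show u ∈ ({u, (j : ℕ) + 1} : Finset ℕ) by simp)
    exact (Finset.mem_Icc.mp this).1
  have hun : u ≤ n := by have := j.isLt; omega
  have hm := mate_eq hu1 hun hmem (by omega)
  rw [hm]
  constructor
  · omega
  · have : u - 1 + 1 = u := by omega
    rw [this]; exact hmem

lemma mate_spec_up {P : SP n} (hP : ∀ B ∈ P.parts, B.card ≤ 2) {j : Fin n}
    (hj : toPath P j = .up) :
    (j : ℕ) + 1 < (mate P j : ℕ) + 1 ∧ {(j : ℕ) + 1, (mate P j : ℕ) + 1} ∈ P.parts := by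
  obtain ⟨w, hw, hmem⟩ := (tp_up_pair hP).mp hj
  have hwn : w ≤ n := by
    have := P.le hmem (show w ∈ ({(j : ℕ) + 1, w} : Finset ℕ) by simp)
    exact (Finset.mem_Icc.mp this).2
  have hm := mate_eq (u := w) (by omega) hwn (by rw [Finset.pair_comm]; exact hmem) (by omega)
  rw [hm]
  constructor
  · omega
  · have : w - 1 + 1 = w := by omega
    rw [this]; exact hmem

lemma mate_down_up {P : SP n} (hP : ∀ B ∈ P.parts, B.card ≤ 2) {j : Fin n}
    (hj : toPath P j = .down) : toPath P (mate P j) = .up := by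
  obtain ⟨hlt, hmem⟩ := mate_spec_down hP hj
  exact (tp_up_pair hP).mpr ⟨(j : ℕ) + 1, hlt, hmem⟩

lemma mate_up_down {P : SP n} (hP : ∀ B ∈ P.parts, B.card ≤ 2) {j : Fin n}
    (hj : toPath P j = .up) : toPath P (mate P j) = .down := by
  obtain ⟨hlt, hmem⟩ := mate_spec_up hP hj
  exact (tp_down_pair hP).mpr ⟨(j : ℕ) + 1, hlt, hmem⟩

lemma mate_mate_down {P : SP n} (hP : ∀ B ∈ P.parts, B.card ≤ 2) {j : Fin n}
    (hj : toPath P j = .down) : mate P (mate P j) = j := by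
  obtain ⟨hlt, hmem⟩ := mate_spec_down hP hj
  have := j.isLt
  have hm := mate_eq (j := mate P j) (u := (j : ℕ) + 1) (by omega) (by omega)
    (by rw [Finset.pair_comm]; exact hmem) (by omega)
  exact Fin.ext (by rw [hm]; omega)

lemma mate_mate_up {P : SP n} (hP : ∀ B ∈ P.parts, B.card ≤ 2) {j : Fin n}
    (hj : toPath P j = .up) : mate P (mate P j) = j := by
  obtain ⟨hlt, hmem⟩ := mate_spec_up hP hj
  have := j.isLt
  have hm := mate_eq (j := mate P j) (u := (j : ℕ) + 1) (by omega) (by omega) hmem (by omega)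
  exact Fin.ext (by rw [hm]; omega)

lemma toPath_motzkin {P : SP n} (hP : ∀ B ∈ P.parts, B.card ≤ 2) :
    IsMotzkinPath (toPath P) := by
  classical
  have hcard : ∀ i : ℕ,
      ((Finset.univ.filter fun j : Fin n => (j : ℕ) < i ∧  toPath P j = .down)).card ≤
      ((Finset.univ.filter fun j : Fin n => (j : ℕ) < i ∧  toPath P j = .up)).card := by
    intro i
    apply Finset.card_le_card_of_injOn (mate P)
    · intro j hj
      simp only [Finset.mem_coe, Finset.mem_filter, Finset.mem_univ, true_and] at hj ⊢
      refine ⟨?_, mate_down_up hP hj.2⟩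
      have := (mate_spec_down hP hj.2).1
      omega
    · intro j hj j' hj' hjj
      simp only [Finset.coe_filter, Set.mem_setOf_eq] at hj hj'
      have := mate_mate_down hP hj.2.2
      rw [hjj, mate_mate_down hP hj'.2.2] at this
      exact this.symm
  constructor
  · intro i
    rw [mht_card]
    have := hcard i
    omega
  · rw [mht_card]
    have h1 := hcard n
    have h2 : ((Finset.univ.filter fun j : Fin n => (j : ℕ) < n ∧  toPath P j = .up)).card ≤
        ((Finset.univ.filter fun j : Fin n => (j : ℕ) < n ∧  toPath P j = .down)).card := by
      apply Finset.card_le_card_of_injOn (mate P)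
      · intro j hj
        simp only [Finset.mem_coe, Finset.mem_filter, Finset.mem_univ, true_and] at hj ⊢
        exact ⟨(mate P j).isLt, mate_up_down hP hj.2⟩
      · intro j hj j' hj' hjj
        simp only [Finset.coe_filter, Set.mem_setOf_eq] at hj hj'
        have := mate_mate_up hP hj.2.2
        rw [hjj, mate_mate_up hP hj'.2.2] at this
        exact this.symm
    omega

end NCPZero
namespace NCPZero

variable {n : ℕ}

lemma mem_icc_of_pair {P : SP n} {a b : ℕ} (h : {a, b} ∈ P.parts) :
    (1 ≤ a ∧ a ≤ n) ∧ 1 ≤ b ∧ b ≤ n := by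
  have ha := P.le h (show a ∈ ({a, b} : Finset ℕ) by simp)
  have hb := P.le h (show b ∈ ({a, b} : Finset ℕ) by simp)
  rw [Finset.mem_Icc] at ha hb
  exact ⟨ha, hb⟩

lemma pair_mem_of {P Q : SP n} (hP : Good P) (hQ : Good Q)
    (hf : toPath P = toPath Q) {b : ℕ}
    (IH : ∀ m, m < b → ∀ x, x < m → ({x, m} ∈ P.parts ↔ {x, m} ∈ Q.parts))
    {a : ℕ} (hab : a < b) (h : {a, b} ∈ P.parts) : {a, b} ∈ Q.parts := by
  obtain ⟨⟨ha1, han⟩, hb1, hbn⟩ := mem_icc_of_pair h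
  -- position of b
  set jb : Fin n := ⟨b - 1, by omega⟩ with hjb
  have hjbv : (jb : ℕ) + 1 = b := by simp [hjb]; omega
  have hdownP : toPath P jb = .down := by
    rw [tp_down_pair hP.1, hjbv]
    exact ⟨a, hab, h⟩
  have hdownQ : toPath Q jb = .down := by rw [← hf]; exact hdownP
  rw [tp_down_pair hQ.1, hjbv] at hdownQ
  obtain ⟨a', ha'b, h'⟩ := hdownQ
  rcases lt_trichotomy a a' with hlt | heqa | hgt
  · -- a < a' : a' is an opener in Q, hence in P; derive a contradiction
    exfalso
    obtain ⟨⟨ha'1, _⟩, _, _⟩ := mem_icc_of_pair h'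
    set ja : Fin n := ⟨a' - 1, by omega⟩ with hja
    have hjav : (ja : ℕ) + 1 = a' := by simp [hja]; omega
    have hupQ : toPath Q ja = .up := by
      rw [tp_up_pair hQ.1, hjav]
      exact ⟨b, ha'b, h'⟩
    have hupP : toPath P ja = .up := by rw [hf]; exact hupQ
    rw [tp_up_pair hP.1, hjav] at hupP
    obtain ⟨c, ha'c, hc⟩ := hupP
    rcases lt_trichotomy c b with hcb | hcb | hcb
    · -- c < b : use IH to move {a', c} to Q, b's partner clash
      have hcQ : {a', c} ∈ Q.parts := (IH c hcb a' ha'c).mp hc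
      have := Q.eq_of_mem_parts hcQ h' (show a' ∈ ({a', c} : Finset ℕ) by simp)
        (show a' ∈ ({a', b} : Finset ℕ) by simp)
      have hcb' : c ∈ ({a', b} : Finset ℕ) := by rw [← this]; simp
      rcases Finset.mem_insert.mp hcb' with rfl | hx
      · omega
      · rw [Finset.mem_singleton.mp hx] at hcb; omega
    · -- c = b : then {a', b} ∈ P.parts clashes with {a, b}
      subst hcb
      have := P.eq_of_mem_parts hc h (show c ∈ ({a', c} : Finset ℕ) by simp)
        (show c ∈ ({a, c} : Finset ℕ) by simp)
      have ha'm : a' ∈ ({a, c} : Finset ℕ) := by rw [← this]; simp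
      rcases Finset.mem_insert.mp ha'm with rfl | hx
      · omega
      · rw [Finset.mem_singleton.mp hx] at ha'b; omega
    · -- b < c : crossing in P
      exact hP.2 a b a' c h hc hlt ha'b hcb
  · rw [← heqa] at h'; exact h'
  · -- a' < a : a is an opener in P, hence in Q
    set ja : Fin n := ⟨a - 1, by omega⟩ with hja
    have hjav : (ja : ℕ) + 1 = a := by simp [hja]; omega
    have hupP : toPath P ja = .up := by
      rw [tp_up_pair hP.1, hjav]
      exact ⟨b, hab, h⟩
    have hupQ : toPath Q ja = .up := by rw [← hf]; exact hupP
    rw [tp_up_pair hQ.1, hjav] at hupQ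
    obtain ⟨c, hac, hc⟩ := hupQ
    rcases lt_trichotomy c b with hcb | hcb | hcb
    · -- c < b : IH moves {a, c} to P, clash with {a, b}
      exfalso
      have hcP : {a, c} ∈ P.parts := (IH c hcb a hac).mpr hc
      have := P.eq_of_mem_parts hcP h (show a ∈ ({a, c} : Finset ℕ) by simp)
        (show a ∈ ({a, b} : Finset ℕ) by simp)
      have hcm : c ∈ ({a, b} : Finset ℕ) := by rw [← this]; simp
      rcases Finset.mem_insert.mp hcm with rfl | hx
      · omega
      · rw [Finset.mem_singleton.mp hx] at hcb; omega
    · subst hcb; exact hc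
    · -- b < c : crossing in Q with {a', b} and {a, c}
      exact absurd (hQ.2 a' b a c h' hc hgt hab hcb) not_false
  
lemma pair_iff {P Q : SP n} (hP : Good P) (hQ : Good Q)
    (hf : toPath P = toPath Q) : ∀ b x, x < b → ({x, b} ∈ P.parts ↔ {x, b} ∈ Q.parts) := by
  intro b
  induction b using Nat.strong_induction_on with
  | _ b IH =>
    intro x hxb
    have IH' : ∀ m, m < b → ∀ x, x < m → ({x, m} ∈ P.parts ↔ {x, m} ∈ Q.parts) :=
      fun m hm x hx => IH m hm x hx
    exact ⟨fun h => pair_mem_of hP hQ hf IH' hxb h,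
      fun h => pair_mem_of hQ hP hf.symm (fun m hm x hx => (IH' m hm x hx).symm) hxb h⟩

lemma toPath_injOn {P Q : SP n} (hP : Good P) (hQ : Good Q)
    (hf : toPath P = toPath Q) : P = Q := by
  have key : ∀ (P' Q' : SP n), Good P' → Good Q' → toPath P' = toPath Q' →
      ∀ B ∈ P'.parts, B ∈ Q'.parts := by
    intro P' Q' hP' hQ' hf' B hB
    have hne := P'.nonempty_of_mem_parts hB
    have hcard := hP'.1 B hB
    interval_cases hc : B.card
    · exact absurd (Finset.card_eq_zero.mp hc) (Finset.nonempty_iff_ne_empty.mp hne)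
    · obtain ⟨v, rfl⟩ := Finset.card_eq_one.mp hc
      have hv1 : 1 ≤ v ∧ v ≤ n := by
        have := P'.le hB (Finset.mem_singleton_self v)
        exact Finset.mem_Icc.mp this
      set jv : Fin n := ⟨v - 1, by omega⟩ with hjv
      have hjvv : (jv : ℕ) + 1 = v := by simp [hjv]; omega
      have : toPath P' jv = .flat := by rw [tp_flat, hjvv]; exact hB
      rw [hf'] at this
      rw [tp_flat, hjvv] at this
      exact this
    · obtain ⟨u, w, huw, rfl⟩ := Finset.card_eq_two.mp hc
      rcases lt_or_gt_of_ne huw with hlt | hgt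
      · exact (pair_iff hP' hQ' hf' w u hlt).mp hB
      · rw [Finset.pair_comm]
        rw [Finset.pair_comm] at hB
        exact (pair_iff hP' hQ' hf' u w hgt).mp hB
  have hsub1 := key P Q hP hQ hf
  have hsub2 := key Q P hQ hP hf.symm
  have : P.parts = Q.parts := by
    apply Finset.Subset.antisymm
    · intro B hB; exact hsub1 B hB
    · intro B hB; exact hsub2 B hB
  exact Finpartition.ext this

end NCPZero
namespace NCPZero

variable {n : ℕ}

/-- Positions `a < c` are matched by the first-return rule. -/
def matched (f : Fin n → MStep) (a c : ℕ) : Prop :=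
  ∃ (ha : a < n) (hc : c < n), a < c ∧ f ⟨a, ha⟩ = .up ∧ f ⟨c, hc⟩ = .down ∧
    mht f (c + 1) = mht f a ∧ ∀ t, a < t → t ≤ c → mht f a < mht f t

lemma matched_lt {f : Fin n → MStep} {a c : ℕ} (h : matched f a c) : a < c := by
  obtain ⟨_, _, h, _⟩ := h; exact h

lemma matched_ltn {f : Fin n → MStep} {a c : ℕ} (h : matched f a c) : a < n ∧ c < n := by
  obtain ⟨ha, hc, _⟩ := h; exact ⟨ha, hc⟩

lemma matched_unique_right {f : Fin n → MStep} {a c c' : ℕ}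
    (h : matched f a c) (h' : matched f a c') : c = c' := by
  by_contra hne
  wlog hlt : c < c' generalizing c c'
  · exact this h' h (Ne.symm hne) (by omega)
  obtain ⟨ha, hc, hac, hup, hdown, hret, hmin⟩ := h
  obtain ⟨_, hc', hac', _, _, _, hmin'⟩ := h'
  have := hmin' (c + 1) (by omega) (by omega)
  omega
  
lemma matched_unique_left {f : Fin n → MStep} {a a' c : ℕ}
    (h : matched f a c) (h' : matched f a' c) : a = a' := by
  by_contra hne
  wlog hlt : a < a' generalizing a a'
  · exact this h' h (Ne.symm hne) (by omega)
  obtain ⟨ha, hc, hac, hup, hdown, hret, hmin⟩ := h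
  obtain ⟨ha', _, ha'c, hup', _, hret', hmin'⟩ := h'
  have h1 := hmin a' (by omega) (by omega)
  omega

lemma matched_not_updown {f : Fin n → MStep} {a c c' : ℕ}
    (h : matched f a c) (h' : matched f c c') : False := by
  obtain ⟨ha, hc, _, _, hdown, _⟩ := h
  obtain ⟨hc2, _, _, hup, _⟩ := h'
  rw [show (⟨c, hc2⟩ : Fin n) = ⟨c, hc⟩ from rfl] at hup
  rw [hup] at hdown
  exact MStep.noConfusion hdown

open Classical in
lemma exists_matched_up {f : Fin n → MStep} (hf : IsMotzkinPath f) {a : ℕ} (ha : a < n)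
    (hup : f ⟨a, ha⟩ = .up) : ∃ c, matched f a c := by
  have hex : ∃ t, a < t ∧ mht f t ≤ mht f a := ⟨n, ha, by rw [hf.2]; exact hf.1 a⟩
  obtain ⟨T, ⟨hTa, hTle⟩, hTminp, hTn⟩ :
      ∃ T, (a < T ∧ mht f T ≤ mht f a) ∧ (∀ t, t < T → ¬(a < t ∧ mht f t ≤ mht f a)) ∧ T ≤ n :=
    ⟨Nat.find hex, Nat.find_spec hex, fun t ht => Nat.find_min hex ht,
      Nat.find_min' hex ⟨ha, by rw [hf.2]; exact hf.1 a⟩⟩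
  have hmin : ∀ t, t < T → a < t → mht f a < mht f t := by
    intro t ht hat
    have := hTminp t ht
    push_neg at this
    exact this hat
  have hTa1 : T ≠ a + 1 := by
    intro he
    rw [he, mht_succ f ha, hup] at hTle
    simp only [stepval] at hTle
    omega
  have hT2 : a + 2 ≤ T := by omega
  set c := T - 1 with hc
  have hcn : c < n := by omega
  have hmc : mht f a < mht f c := hmin c (by omega) (by omega)
  have hstep : mht f (c + 1) = mht f c + stepval (f ⟨c, hcn⟩) := mht_succ f hcn
  have hc1T : c + 1 = T := by omega
  rw [hc1T] at hstep
  have hdown : f ⟨c, hcn⟩ = .down := by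
    cases he : f ⟨c, hcn⟩ <;> rw [he] at hstep <;> simp [stepval] at hstep <;> omega
  refine ⟨c, ha, hcn, by omega, hup, hdown, ?_, ?_⟩
  · rw [hc1T]
    rw [hdown] at hstep
    simp only [stepval] at hstep
    omega
  · intro t hat htc
    exact hmin t (by omega) hat

open Classical in
lemma exists_matched_down {f : Fin n → MStep} (hf : IsMotzkinPath f) {c : ℕ} (hc : c < n)
    (hdown : f ⟨c, hc⟩ = .down) : ∃ a, matched f a c := by
  have hP0 : mht f 0 ≤ mht f (c + 1) := by
    rw [show mht f 0 = 0 by simp [mht_eq_sum]]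
    exact hf.1 (c + 1)
  obtain ⟨a, hspec, hac, hgr'⟩ :
      ∃ a, mht f a ≤ mht f (c + 1) ∧ a ≤ c ∧ ∀ t, a < t → t ≤ c → ¬ mht f t ≤ mht f (c + 1) :=
    ⟨Nat.findGreatest (fun t => mht f t ≤ mht f (c + 1)) c,
      Nat.findGreatest_spec (P := fun t => mht f t ≤ mht f (c + 1)) (Nat.zero_le c) hP0, Nat.findGreatest_le c,
      fun t hat htc => Nat.findGreatest_is_greatest (P := fun t => mht f t ≤ mht f (c + 1)) hat htc⟩
  have hstepc : mht f (c + 1) = mht f c + stepval (f ⟨c, hc⟩) := mht_succ f hc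
  rw [hdown] at hstepc
  simp only [stepval] at hstepc
  have hanec : a ≠ c := by
    intro he
    rw [he] at hspec
    omega
  have hgr : ∀ t, a < t → t ≤ c → mht f (c + 1) < mht f t := by
    intro t hat htc
    have := hgr' t hat htc
    omega
  have han : a < n := by omega
  have hstepa : mht f (a + 1) = mht f a + stepval (f ⟨a, han⟩) := mht_succ f han
  have ha1 : mht f (c + 1) < mht f (a + 1) := hgr (a + 1) (by omega) (by omega)
  have hup : f ⟨a, han⟩ = .up := by
    cases he : f ⟨a, han⟩ <;> rw [he] at hstepa <;> simp [stepval] at hstepa <;> omega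
  rw [hup] at hstepa
  simp only [stepval] at hstepa
  have hret : mht f (c + 1) = mht f a := by omega
  refine ⟨a, han, hc, by omega, hup, hdown, hret, ?_⟩
  intro t hat htc
  rw [← hret]
  exact hgr t hat htc

end NCPZero
namespace NCPZero

variable {n : ℕ}

def Rel (f : Fin n → MStep) (u v : ℕ) : Prop :=
  u = v ∨ matched f (u - 1) (v - 1) ∨ matched f (v - 1) (u - 1)

lemma rel_refl (f : Fin n → MStep) (v : ℕ) : Rel f v v := Or.inl rfl

lemma rel_symm {f : Fin n → MStep} {u v : ℕ} (h : Rel f u v) : Rel f v u := by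
  rcases h with rfl | h | h
  · exact Or.inl rfl
  · exact Or.inr (Or.inr h)
  · exact Or.inr (Or.inl h)

lemma rel_trans {f : Fin n → MStep} {v x w : ℕ} (hv : 1 ≤ v) (hx : 1 ≤ x) (hw : 1 ≤ w)
    (h1 : Rel f v x) (h2 : Rel f x w) : Rel f v w := by
  rcases h1 with rfl | h1 | h1
  · exact h2
  · rcases h2 with rfl | h2 | h2
    · exact Or.inr (Or.inl h1)
    · exact absurd (matched_not_updown h1 h2) not_false
    · have := matched_unique_left h1 h2
      have : v = w := by omega
      exact Or.inl this
  · rcases h2 with rfl | h2 | h2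
    · exact Or.inr (Or.inr h1)
    · have := matched_unique_right h1 h2
      have : v = w := by
        have := matched_lt h1
        omega
      exact Or.inl this
    · exact absurd (matched_not_updown h2 h1) not_false

lemma rel_unique {f : Fin n → MStep} {v w w' : ℕ} (hw : 1 ≤ w) (hw' : 1 ≤ w')
    (h1 : Rel f v w) (h2 : Rel f v w') (hne1 : w ≠ v) (hne2 : w' ≠ v) : w = w' := by
  rcases h1 with rfl | h1 | h1
  · exact absurd rfl hne1
  · rcases h2 with rfl | h2 | h2
    · exact absurd rfl hne2
    · have := matched_unique_right h1 h2
      have h3 := matched_lt h1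
      omega
    · exact absurd (matched_not_updown h2 h1) not_false
  · rcases h2 with rfl | h2 | h2
    · exact absurd rfl hne2
    · exact absurd (matched_not_updown h1 h2) not_false
    · have := matched_unique_left h1 h2
      omega

open Classical in
noncomputable def blk (f : Fin n → MStep) (v : ℕ) : Finset ℕ :=
  (Finset.Icc 1 n).filter (Rel f v)

lemma mem_blk {f : Fin n → MStep} {v w : ℕ} :
    w ∈ blk f v ↔ w ∈ Finset.Icc 1 n ∧ Rel f v w := by
  classical
  simp [blk]

lemma self_mem_blk {f : Fin n → MStep} {v : ℕ} (hv : v ∈ Finset.Icc 1 n) : v ∈ blk f v :=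
  mem_blk.mpr ⟨hv, rel_refl f v⟩

lemma blk_eq_of_mem {f : Fin n → MStep} {v x : ℕ} (hv : v ∈ Finset.Icc 1 n)
    (hx : x ∈ blk f v) : blk f x = blk f v := by
  obtain ⟨hxI, hrel⟩ := mem_blk.mp hx
  have hv1 := (Finset.mem_Icc.mp hv).1
  have hx1 := (Finset.mem_Icc.mp hxI).1
  ext w
  rw [mem_blk, mem_blk]
  constructor
  · rintro ⟨hwI, h⟩
    exact ⟨hwI, rel_trans hv1 hx1 (Finset.mem_Icc.mp hwI).1 hrel h⟩
  · rintro ⟨hwI, h⟩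
    exact ⟨hwI, rel_trans hx1 hv1 (Finset.mem_Icc.mp hwI).1 (rel_symm hrel) h⟩

lemma blk_pair {f : Fin n → MStep} {v w : ℕ} (hv : v ∈ Finset.Icc 1 n)
    (hw : w ∈ Finset.Icc 1 n) (hne : w ≠ v) (hrel : Rel f v w) : blk f v = {v, w} := by
  ext x
  rw [mem_blk]
  constructor
  · rintro ⟨hxI, h⟩
    by_cases hxv : x = v
    · simp [hxv]
    · have := rel_unique (Finset.mem_Icc.mp hxI).1 (Finset.mem_Icc.mp hw).1 h hrel hxv hne
      simp [this]
  · intro hx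
    rcases Finset.mem_insert.mp hx with rfl | hx
    · exact ⟨hv, rel_refl f x⟩
    · rw [Finset.mem_singleton.mp hx]
      exact ⟨hw, hrel⟩

lemma blk_single {f : Fin n → MStep} {v : ℕ} (hv : v ∈ Finset.Icc 1 n)
    (hno : ∀ w, w ∈ Finset.Icc 1 n → Rel f v w → w = v) : blk f v = {v} := by
  ext x
  rw [mem_blk, Finset.mem_singleton]
  constructor
  · rintro ⟨hxI, h⟩
    exact hno x hxI h
  · rintro rfl
    exact ⟨hv, rel_refl f x⟩

open Classical in
noncomputable def fromPath (f : Fin n → MStep) : SP n where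
  parts := (Finset.Icc 1 n).image (blk f)
  supIndep := by
    rw [Finset.supIndep_iff_pairwiseDisjoint]
    intro B hB C hC hne
    simp only [Finset.coe_image, Set.mem_image, Finset.mem_coe] at hB hC
    obtain ⟨u, hu, rfl⟩ := hB
    obtain ⟨v, hv, rfl⟩ := hC
    simp only [Function.onFun, id_eq]
    rw [Finset.disjoint_left]
    intro x hxu hxv
    exact hne (by rw [← blk_eq_of_mem hu hxu, blk_eq_of_mem hv hxv])
  sup_parts := by
    apply le_antisymm
    · apply Finset.sup_le
      intro B hB
      obtain ⟨u, hu, rfl⟩ := Finset.mem_image.mp hB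
      intro x hx
      exact (mem_blk.mp hx).1
    · intro v hv
      rw [Finset.mem_sup]
      exact ⟨blk f v, Finset.mem_image_of_mem _ hv, self_mem_blk hv⟩
  bot_notMem := by
    intro h
    obtain ⟨u, hu, heq⟩ := Finset.mem_image.mp h
    have := self_mem_blk (f := f) hu
    rw [heq] at this
    exact absurd this (Finset.notMem_empty u)

lemma fromPath_parts (f : Fin n → MStep) :
    (fromPath f).parts = (Finset.Icc 1 n).image (blk f) := rfl

lemma matched_up' {f : Fin n → MStep} {a c : ℕ} (h : matched f a c) (ha' : a < n) :
    f ⟨a, ha'⟩ = .up := by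
  obtain ⟨ha, hc, _, hup, _⟩ := h
  exact hup

lemma matched_down' {f : Fin n → MStep} {a c : ℕ} (h : matched f a c) (hc' : c < n) :
    f ⟨c, hc'⟩ = .down := by
  obtain ⟨ha, hc, _, _, hdown, _⟩ := h
  exact hdown

lemma fromPath_card_le {f : Fin n → MStep} : ∀ B ∈ (fromPath f).parts, B.card ≤ 2 := by
  intro B hB
  obtain ⟨v, hv, rfl⟩ := Finset.mem_image.mp hB
  by_cases hex : ∃ w, w ∈ Finset.Icc 1 n ∧ w ≠ v ∧ Rel f v w
  · obtain ⟨w, hw, hne, hrel⟩ := hex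
    rw [blk_pair hv hw hne hrel]
    exact (Finset.card_insert_le v {w}).trans (by simp)
  · push_neg at hex
    rw [blk_single hv (fun w hw hr => by
      by_contra hne
      exact (hex w hw hne) hr)]
    simp

lemma rel_pair_matched {f : Fin n → MStep} {a b : ℕ} (ha : 1 ≤ a) (hb : 1 ≤ b)
    (hab : a < b) (hrel : Rel f a b) : matched f (a - 1) (b - 1) := by
  rcases hrel with heq | h | h
  · omega
  · exact h
  · have := matched_lt h
    omega

lemma fromPath_noncross {f : Fin n → MStep} :
    ∀ a b c d : ℕ, {a, b} ∈ (fromPath f).parts → {c, d} ∈ (fromPath f).parts →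
      a < c → c < b → b < d → False := by
  intro a b c d hab hcd h1 h2 h3
  -- extract Rel a b and Rel c d
  have hmem : ∀ x y : ℕ, {x, y} ∈ (fromPath f).parts → x ∈ Finset.Icc 1 n ∧
      y ∈ Finset.Icc 1 n ∧ Rel f x y := by
    intro x y hxy
    obtain ⟨u, hu, heq⟩ := Finset.mem_image.mp hxy
    have hxm : x ∈ blk f u := by rw [heq]; simp
    have hym : y ∈ blk f u := by rw [heq]; simp
    have hbx := blk_eq_of_mem hu hxm
    have hyx : y ∈ blk f x := by rw [hbx]; exact hym
    obtain ⟨hyI, hr⟩ := mem_blk.mp hyx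
    exact ⟨(mem_blk.mp hxm).1, hyI, hr⟩
  obtain ⟨haI, hbI, hrab⟩ := hmem a b hab
  obtain ⟨hcI, hdI, hrcd⟩ := hmem c d hcd
  have ha1 := (Finset.mem_Icc.mp haI).1
  have hb1 := (Finset.mem_Icc.mp hbI).1
  have hc1 := (Finset.mem_Icc.mp hcI).1
  have hd1 := (Finset.mem_Icc.mp hdI).1
  have hm1 := rel_pair_matched ha1 hb1 (by omega) hrab
  have hm2 := rel_pair_matched hc1 hd1 (by omega) hrcd
  obtain ⟨_, _, _, _, _, hret1, hmin1⟩ := hm1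
  obtain ⟨_, _, _, _, _, hret2, hmin2⟩ := hm2
  have hC : mht f (a - 1) < mht f (c - 1) := hmin1 (c - 1) (by omega) (by omega)
  have hB : mht f (c - 1) < mht f (b - 1 + 1) := hmin2 (b - 1 + 1) (by omega) (by omega)
  rw [hret1] at hB
  omega

lemma fromPath_good (f : Fin n → MStep) : Good (fromPath f) :=
  ⟨fromPath_card_le, fromPath_noncross⟩

lemma not_singleton_of_rel {f : Fin n → MStep} {v w : ℕ} (hv : v ∈ Finset.Icc 1 n)
    (hw : w ∈ Finset.Icc 1 n) (hne : w ≠ v) (hrel : Rel f v w) :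
    {v} ∉ (fromPath f).parts := by
  intro hmem
  obtain ⟨u, hu, hequ⟩ := Finset.mem_image.mp hmem
  have huu := self_mem_blk (f := f) hu
  rw [hequ] at huu
  have huv : u = v := Finset.mem_singleton.mp huu
  subst huv
  have : w ∈ blk f u := mem_blk.mpr ⟨hw, hrel⟩
  rw [hequ] at this
  exact hne (Finset.mem_singleton.mp this)

lemma toPath_fromPath {f : Fin n → MStep} (hf : IsMotzkinPath f) :
    toPath (fromPath f) = f := by
  funext j
  have hjn := j.isLt
  set v := (j : ℕ) + 1 with hvdef
  have hv : v ∈ Finset.Icc 1 n := Finset.mem_Icc.mpr ⟨by omega, by omega⟩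
  have hv1 : v - 1 = (j : ℕ) := by omega
  have hfj : f ⟨v - 1, by omega⟩ = f j := by congr 1
  cases hstep : f j
  · -- up
    have hm : ∃ c, matched f (j : ℕ) c := exists_matched_up hf hjn (by rw [← hstep])
    obtain ⟨c, hm⟩ := hm
    obtain ⟨hcn1, hcn⟩ := matched_ltn hm
    have hjc := matched_lt hm
    set w := c + 1 with hwdef
    have hw : w ∈ Finset.Icc 1 n := Finset.mem_Icc.mpr ⟨by omega, by omega⟩
    have hrel : Rel f v w := by
      right; left
      have e1 : v - 1 = (j : ℕ) := by omega
      have e2 : w - 1 = c := by omega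
      rw [e1, e2]
      exact hm
    unfold toPath
    rw [if_neg (not_singleton_of_rel hv hw (by omega) hrel), if_pos]
    exact ⟨w, by omega, blk f v, Finset.mem_image_of_mem _ hv, self_mem_blk hv,
      mem_blk.mpr ⟨hw, hrel⟩⟩
  · -- down
    have hm : ∃ a, matched f a (j : ℕ) := exists_matched_down hf hjn (by rw [← hstep])
    obtain ⟨a, hm⟩ := hm
    have haj := matched_lt hm
    set u := a + 1 with hudef
    have hu : u ∈ Finset.Icc 1 n := Finset.mem_Icc.mpr ⟨by omega, by omega⟩
    have hrel : Rel f v u := by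
      right; right
      have e1 : v - 1 = (j : ℕ) := by omega
      have e2 : u - 1 = a := by omega
      rw [e1, e2]
      exact hm
    unfold toPath
    rw [if_neg (not_singleton_of_rel hv hu (by omega) hrel), if_neg]
    rintro ⟨x, hvx, B, hB, hvB, hxB⟩
    obtain ⟨y, hy, heqy⟩ := Finset.mem_image.mp hB
    have hvy : v ∈ blk f y := by rw [heqy]; exact hvB
    have hxy : x ∈ blk f y := by rw [heqy]; exact hxB
    have hbv := blk_eq_of_mem hy hvy
    have hxv : x ∈ blk f v := by rw [hbv]; exact hxy
    obtain ⟨hxI, hrx⟩ := mem_blk.mp hxv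
    rcases hrx with heq | hmm | hmm
    · omega
    · -- matched (v-1) (x-1) : f at v-1 = j would be up
      have := matched_up' hmm (by omega)
      rw [hfj, hstep] at this
      exact MStep.noConfusion this
    · have := matched_lt hmm
      have hx1 := (Finset.mem_Icc.mp hxI).1
      omega
  · -- flat
    have hflat : toPath (fromPath f) j = .flat := by
      rw [tp_flat]
      have hsingle : blk f v = {v} := by
        apply blk_single hv
        intro w hw hr
        rcases hr with heq | hmm | hmm
        · omega
        · have := matched_up' hmm (by omega)
          rw [hfj, hstep] at this
          exact absurd this (by simp)
        · have := matched_down' hmm (by omega)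
          rw [hfj, hstep] at this
          exact absurd this (by simp)
      rw [← hsingle]
      exact Finset.mem_image_of_mem _ hv
    exact hflat

end NCPZero
/-- The number of 0-distant noncrossing partitions of `[n]` is the `n`-th
Motzkin number (the number of Motzkin paths of length `n`). -/
theorem ncp_zero_eq_motzkin (n : ℕ) : NCP 0 n = motzkin n := by
  rw [NCP, motzkin]
  have hset : {P : SP n | dcr 0 P = 0} = {P : SP n | NCPZero.Good P} := by
    ext P
    simp only [Set.mem_setOf_eq]
    exact ⟨NCPZero.dcr_good, NCPZero.good_dcr⟩
  rw [hset]
  have himg : NCPZero.toPath '' {P : SP n | NCPZero.Good P}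
      = {f : Fin n → MStep | IsMotzkinPath f} := by
    apply Set.Subset.antisymm
    · rintro f ⟨P, hP, rfl⟩
      exact NCPZero.toPath_motzkin hP.1
    · intro f hf
      exact ⟨NCPZero.fromPath f, NCPZero.fromPath_good f, NCPZero.toPath_fromPath hf⟩
  rw [← himg, Set.ncard_image_of_injOn]
  intro P hP Q hQ h
  exact NCPZero.toPath_injOn hP hQ h
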